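/- (Aziz) Let P be a polynomial of degree n all of whose zeros z satisfy |z| ≥ 1. Then |zP'(z)| ≤ |nP(z) - zP'(z)| for all z in the closed unit disk. -/

import Mathlib

open Polynomial

lemma eval_prod_ne_zero (s : Multiset ℂ) (z : ℂ) (hz : ∀ r ∈ s, z ≠ r) :
    ((s.map fun r => X - C r).prod).eval z ≠ 0 := by
  rw [eval_multiset_prod]
  apply Multiset.prod_ne_zero
  intro h
  obtain ⟨p, hp, hp0⟩ := Multiset.mem_map.mp h
  obtain ⟨r, hr, rfl⟩ := Multiset.mem_map.mp hp
  simp only [eval_sub, eval_X, eval_C] at hp0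
  exact hz r hr (sub_eq_zero.mp hp0)

lemma logderiv_prod (s : Multiset ℂ) (z : ℂ) (hz : ∀ r ∈ s, z ≠ r) :
    (derivative (s.map fun r => X - C r).prod).eval z / ((s.map fun r => X - C r).prod).eval z
      = (s.map fun r => (z - r)⁻¹).sum := by
  induction s using Multiset.induction with
  | empty => simp
  | cons a t ih =>
    have hza : z - a ≠ 0 := sub_ne_zero.mpr (hz a (Multiset.mem_cons_self a t))
    have ht : ∀ r ∈ t, z ≠ r := fun r hr => hz r (Multiset.mem_cons_of_mem hr)
    have hT : ((t.map fun r => X - C r).prod).eval z ≠ 0 := eval_prod_ne_zero t z ht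
    simp only [Multiset.map_cons, Multiset.prod_cons, derivative_mul, derivative_sub,
      derivative_X, derivative_C, sub_zero, one_mul, eval_add, eval_mul, eval_sub, eval_X,
      eval_C, Multiset.sum_cons]
    rw [← ih ht]
    field_simp

lemma normSq_le_one (z : ℂ) (hz : ‖z‖ ≤ 1) : z.re ^ 2 + z.im ^ 2 ≤ 1 := by
  have h := Complex.sq_norm z
  rw [Complex.normSq_apply] at h
  nlinarith [norm_nonneg z]

lemma one_le_normSq (r : ℂ) (hr : 1 ≤ ‖r‖) : 1 ≤ r.re ^ 2 + r.im ^ 2 := by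
  have h := Complex.sq_norm r
  rw [Complex.normSq_apply] at h
  nlinarith [norm_nonneg r]

lemma re_term_le_half (z r : ℂ) (hz : ‖z‖ ≤ 1) (hr : 1 ≤ ‖r‖) (hzr : z ≠ r) :
    (z * (z - r)⁻¹).re ≤ 1 / 2 := by
  have hd : z - r ≠ 0 := sub_ne_zero.mpr hzr
  have hpos : 0 < Complex.normSq (z - r) := Complex.normSq_pos.mpr hd
  have h1 := normSq_le_one z hz
  have h2 := one_le_normSq r hr
  rw [← div_eq_mul_inv, Complex.div_re, ← add_div, div_le_iff₀ hpos]
  simp only [Complex.normSq_apply, Complex.sub_re, Complex.sub_im]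
  nlinarith [h1, h2]

lemma norm_le_of_re_le (s : ℂ) (n : ℕ) (h : s.re ≤ n / 2) : ‖s‖ ≤ ‖(n : ℂ) - s‖ := by
  rw [← Real.sqrt_sq (norm_nonneg s), ← Real.sqrt_sq (norm_nonneg ((n:ℂ) - s))]
  apply Real.sqrt_le_sqrt
  rw [Complex.sq_norm, Complex.sq_norm]
  simp only [Complex.normSq_apply, Complex.sub_re, Complex.sub_im, Complex.natCast_re,
    Complex.natCast_im]
  have hn : (0:ℝ) ≤ (n:ℝ) := Nat.cast_nonneg n
  nlinarith [h, hn]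

/-- (Aziz) If all zeros of `P` satisfy `|w| ≥ 1`, then `|zP'(z)| ≤ |nP(z) - zP'(z)|` on the
closed unit disk. -/
theorem stmt6 (P : Polynomial ℂ) (n : ℕ) (hn : P.natDegree = n) (hP : P ≠ 0)
    (hroots : ∀ w : ℂ, P.eval w = 0 → 1 ≤ ‖w‖)
    (z : ℂ) (hz : ‖z‖ ≤ 1) :
    ‖z * P.derivative.eval z‖ ≤ ‖(n : ℂ) * P.eval z - z * P.derivative.eval z‖ := by
  by_cases hPz : P.eval z = 0
  · simp [hPz]
  · have hsplit : P.Splits := IsAlgClosed.splits P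
    have hfact := hsplit.eq_prod_roots
    have hcard : P.roots.card = n := by
      rw [splits_iff_card_roots.mp hsplit, hn]
    set c := P.leadingCoeff with hc
    have hzr : ∀ r ∈ P.roots, z ≠ r := by
      intro r hr heq
      subst heq
      exact hPz ((isRoot_of_mem_roots hr))
    have hroots' : ∀ r ∈ P.roots, 1 ≤ ‖r‖ := fun r hr =>
      hroots r (isRoot_of_mem_roots hr)
    set M := (P.roots.map fun r => X - C r).prod with hM
    have hMz : M.eval z ≠ 0 := eval_prod_ne_zero P.roots z hzr
    have hlc : c ≠ 0 := leadingCoeff_ne_zero.mpr hP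
    set s : ℂ := z * (P.roots.map fun r => (z - r)⁻¹).sum with hs
    -- key identity : z * P'(z) = s * P(z)
    have hderiv : derivative P = C c * derivative M := by
      conv_lhs => rw [hfact]
      rw [derivative_mul, derivative_C, zero_mul, zero_add]
    have hkey : z * P.derivative.eval z = s * P.eval z := by
      have hld := logderiv_prod P.roots z hzr
      rw [hderiv, hfact]
      simp only [eval_mul, eval_C]
      have : (derivative M).eval z = (P.roots.map fun r => (z - r)⁻¹).sum * M.eval z := by
        field_simp at hld
        simp only [one_div] at hld
        exact (div_eq_iff hMz).mp hld
      rw [this, hs]; ring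
    -- real part bound
    have hre : s.re ≤ (n : ℝ) / 2 := by
      have : s = (P.roots.map fun r => z * (z - r)⁻¹).sum := by
        rw [hs, ← Multiset.sum_map_mul_left]
      rw [this]
      have hmap : ((P.roots.map fun r => z * (z - r)⁻¹).sum).re
          = ((P.roots.map fun r => z * (z - r)⁻¹).map Complex.re).sum := by
        exact map_multiset_sum Complex.reAddGroupHom _
      rw [hmap, Multiset.map_map]
      have hbound : ∀ x ∈ P.roots.map (Complex.re ∘ fun r => z * (z - r)⁻¹), x ≤ 1 / 2 := by
        intro x hx
        obtain ⟨r, hr, rfl⟩ := Multiset.mem_map.mp hx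
        exact re_term_le_half z r hz (hroots' r hr) (hzr r hr)
      have := Multiset.sum_le_card_nsmul _ _ hbound
      rw [Multiset.card_map, hcard] at this
      calc _ ≤ n • (1/2 : ℝ) := this
        _ = (n : ℝ) / 2 := by rw [nsmul_eq_mul]; ring
    have hnorm := norm_le_of_re_le s n hre
    calc ‖z * P.derivative.eval z‖ = ‖s‖ * ‖P.eval z‖ := by rw [hkey, norm_mul]
      _ ≤ ‖(n : ℂ) - s‖ * ‖P.eval z‖ := by
          exact mul_le_mul_of_nonneg_right hnorm (norm_nonneg _)
      _ = ‖((n : ℂ) - s) * P.eval z‖ := (norm_mul _ _).symm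
      _ = ‖(n : ℂ) * P.eval z - z * P.derivative.eval z‖ := by rw [hkey, sub_mul]
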